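/- Let q be a prime power and λ ∈ F_q^× with λ² ≠ det(g) for some g ∈ GL_2(F_q). Then the proportion of elements of the coset SL_2(F_q)·g having eigenvalue λ is exactly 1/(q-1). -/

import Mathlib

open Finset Matrix

section aux

variable {F : Type*} [Field F] [Fintype F] [DecidableEq F]

lemma card_filter_prod {X Y : Type*} [Fintype X] [Fintype Y]
    (P : X × Y → Prop) [DecidablePred P] :
    (univ.filter P).card = ∑ x : X, (univ.filter (fun y => P (x, y))).card := by
  simp only [Finset.card_filter]
  rw [← Finset.univ_product_univ, Finset.sum_product]

lemma card_mul_pair (k : F) :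
    (univ.filter (fun p : F × F => p.1 * p.2 = k)).card
      = (Fintype.card F - 1) + if k = 0 then Fintype.card F else 0 := by
  rw [card_filter_prod]
  rw [← Finset.add_sum_erase _ _ (Finset.mem_univ (0:F))]
  have h0 : (univ.filter (fun y : F => (0:F) * y = k)).card
      = if k = 0 then Fintype.card F else 0 := by
    split_ifs with h
    · subst h; simp
    · rw [Finset.filter_false_of_mem, Finset.card_empty]
      intro y _; simpa [eq_comm] using h
  have h1 : ∀ b ∈ univ.erase (0:F),
      (univ.filter (fun y : F => b * y = k)).card = 1 := by
    intro b hb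
    have hb0 : b ≠ 0 := Finset.ne_of_mem_erase hb
    have : (univ.filter (fun y : F => b * y = k)) = {b⁻¹ * k} := by
      ext y
      simp only [Finset.mem_filter, Finset.mem_univ, true_and, Finset.mem_singleton]
      constructor
      · rintro rfl; field_simp
      · rintro rfl; field_simp
    rw [this, Finset.card_singleton]
  rw [h0, Finset.sum_congr rfl h1]
  simp [Finset.card_erase_of_mem, add_comm]

lemma card_matrix_filter (P : Matrix (Fin 2) (Fin 2) F → Prop) [DecidablePred P] :
    (univ.filter P).card
      = (univ.filter (fun p : (F × F) × (F × F) =>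
          P !![p.1.1, p.2.1; p.2.2, p.1.2])).card := by
  apply Finset.card_nbij' (fun m => ((m 0 0, m 1 1), (m 0 1, m 1 0)))
    (fun p => !![p.1.1, p.2.1; p.2.2, p.1.2])
  · intro m hm
    simp only [Finset.mem_coe, Finset.mem_filter, Finset.mem_univ, true_and] at hm ⊢
    rw [Matrix.eta_fin_two m] at hm; exact hm
  · intro p hp
    simpa using hp
  · intro m _
    simp [← Matrix.eta_fin_two m]
  · intro p _
    simp

lemma det_fin_two_shift (a b c e lam : F) :
    Matrix.det (!![a, b; c, e] - lam • (1 : Matrix (Fin 2) (Fin 2) F))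
      = (a - lam) * (e - lam) - b * c := by
  rw [Matrix.det_fin_two]
  simp [Matrix.one_apply]

lemma count_det (d : F) (hd : d ≠ 0) :
    (univ.filter (fun m : Matrix (Fin 2) (Fin 2) F => Matrix.det m = d)).card
      = Fintype.card F * Fintype.card F * (Fintype.card F - 1)
        + Fintype.card F * (Fintype.card F - 1) := by
  set q := Fintype.card F
  rw [card_matrix_filter]
  rw [card_filter_prod (fun p : (F × F) × (F × F) =>
      Matrix.det !![p.1.1, p.2.1; p.2.2, p.1.2] = d)]
  have inner : ∀ x : F × F,
      (univ.filter (fun y : F × F => Matrix.det !![x.1, y.1; y.2, x.2] = d)).card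
        = (q - 1) + if x.1 * x.2 = d then q else 0 := by
    intro x
    have he : (univ.filter (fun y : F × F => Matrix.det !![x.1, y.1; y.2, x.2] = d))
        = univ.filter (fun y : F × F => y.1 * y.2 = x.1 * x.2 - d) := by
      apply Finset.filter_congr
      intro y _
      rw [Matrix.det_fin_two_of]
      constructor
      · intro h; linear_combination -h
      · intro h; linear_combination -h
    rw [he, card_mul_pair]
    congr 1
    simp [sub_eq_zero]
    rfl
  simp only [inner]
  rw [Finset.sum_add_distrib, Finset.sum_const, Finset.card_univ, ← Finset.sum_filter]
  rw [Finset.sum_const]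
  have : (univ.filter (fun x : F × F => x.1 * x.2 = d)).card = q - 1 := by
    rw [card_mul_pair]; simp [hd]
    rfl
  rw [this]
  simp [Fintype.card_prod, smul_eq_mul]
  ring

end aux

theorem stmt_11 (F : Type*) [Field F] [Fintype F] [DecidableEq F]
    (g : GL (Fin 2) F) (lam : F) (hlam : lam ≠ 0)
    (hdet : lam ^ 2 ≠ Matrix.det (g : Matrix (Fin 2) (Fin 2) F)) :
    ((univ.filter (fun s : Matrix.SpecialLinearGroup (Fin 2) F =>
        Matrix.det ((s : Matrix (Fin 2) (Fin 2) F) * (g : Matrix (Fin 2) (Fin 2) F)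
          - lam • (1 : Matrix (Fin 2) (Fin 2) F)) = 0)).card : ℝ) /
      (Fintype.card (Matrix.SpecialLinearGroup (Fin 2) F)) =
      1 / ((Fintype.card F : ℝ) - 1) := by
  classical
  set d := Matrix.det (g : Matrix (Fin 2) (Fin 2) F) with hd
  have hdu : d * Matrix.det ((g⁻¹ : GL (Fin 2) F) : Matrix (Fin 2) (Fin 2) F) = 1 := by
    rw [hd, ← Matrix.det_mul]
    norm_cast
    rw [mul_inv_cancel]  -- maybe name differs
    simp
  have hd0 : d ≠ 0 := left_ne_zero_of_mul_eq_one hdu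
  have hdun : IsUnit (Matrix.det (g : Matrix (Fin 2) (Fin 2) F)) :=
    IsUnit.of_mul_eq_one _ (hd ▸ hdu)
  have hgg : (g : Matrix (Fin 2) (Fin 2) F) * ((g : Matrix (Fin 2) (Fin 2) F))⁻¹ = 1 :=
    Matrix.mul_nonsing_inv _ hdun
  have hgg' : ((g : Matrix (Fin 2) (Fin 2) F))⁻¹ * (g : Matrix (Fin 2) (Fin 2) F) = 1 :=
    Matrix.nonsing_inv_mul _ hdun
  -- transfer the SL2 counts to matrix counts
  have key1 : (univ.filter (fun s : Matrix.SpecialLinearGroup (Fin 2) F =>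
        Matrix.det ((s : Matrix (Fin 2) (Fin 2) F) * (g : Matrix (Fin 2) (Fin 2) F)
          - lam • (1 : Matrix (Fin 2) (Fin 2) F)) = 0)).card
      = (univ.filter (fun m : Matrix (Fin 2) (Fin 2) F =>
          Matrix.det m = d ∧ Matrix.det (m - lam • 1) = 0)).card := by
    apply Finset.card_nbij (fun s : Matrix.SpecialLinearGroup (Fin 2) F => (s : Matrix (Fin 2) (Fin 2) F) * (g : Matrix (Fin 2) (Fin 2) F))
    · intro s hs
      simp only [Finset.mem_coe, Finset.mem_filter, Finset.mem_univ, true_and] at hs ⊢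
      refine ⟨?_, hs⟩
      rw [Matrix.det_mul, s.2, one_mul]
    · intro s₁ h₁ s₂ h₂ h
      have : (s₁ : Matrix (Fin 2) (Fin 2) F) = s₂ := by
        have h2 := congrArg (fun m => m * ((g⁻¹ : GL (Fin 2) F) : Matrix (Fin 2) (Fin 2) F)) h
        simpa [mul_assoc, hgg] using h2
      exact Subtype.ext this
    · intro m hm
      simp only [Finset.mem_filter, Finset.mem_univ, true_and, Set.mem_image, Finset.coe_filter, Set.mem_setOf_eq] at hm ⊢
      refine ⟨⟨m * ((g⁻¹ : GL (Fin 2) F) : Matrix (Fin 2) (Fin 2) F), ?_⟩, ?_, ?_⟩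
      · rw [Matrix.det_mul, hm.1, hdu]
      · simpa [mul_assoc, hgg'] using hm.2
      · show m * _ * _ = m
        rw [mul_assoc]; simp [hgg']
  have key2 : Fintype.card (Matrix.SpecialLinearGroup (Fin 2) F)
      = (univ.filter (fun m : Matrix (Fin 2) (Fin 2) F => Matrix.det m = d)).card := by
    rw [← Finset.card_univ]
    apply Finset.card_nbij (fun s : Matrix.SpecialLinearGroup (Fin 2) F => (s : Matrix (Fin 2) (Fin 2) F) * (g : Matrix (Fin 2) (Fin 2) F))
    · intro s _
      simp only [Finset.mem_coe, Finset.mem_filter, Finset.mem_univ, true_and]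
      rw [Matrix.det_mul, s.2, one_mul]
    · intro s₁ h₁ s₂ h₂ h
      have : (s₁ : Matrix (Fin 2) (Fin 2) F) = s₂ := by
        have h2 := congrArg (fun m => m * ((g⁻¹ : GL (Fin 2) F) : Matrix (Fin 2) (Fin 2) F)) h
        simpa [mul_assoc, hgg] using h2
      exact Subtype.ext this
    · intro m hm
      simp only [Finset.mem_filter, Finset.mem_univ, true_and, Set.mem_image, Finset.coe_filter, Set.mem_setOf_eq] at hm ⊢
      refine ⟨⟨m * ((g⁻¹ : GL (Fin 2) F) : Matrix (Fin 2) (Fin 2) F), ?_⟩, ?_, ?_⟩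
      · rw [Matrix.det_mul, hm, hdu]
      · exact Finset.mem_coe.2 (Finset.mem_univ _)
      · show m * _ * _ = m
        rw [mul_assoc]; simp [hgg']
  have hinv : lam * lam⁻¹ = 1 := mul_inv_cancel₀ hlam
  clear_value d
  set v : F := lam⁻¹ * (d + lam ^ 2) with hv
  set mu : F := d * lam⁻¹ with hmu
  have hsum : lam + mu = v := by rw [hmu, hv]; field_simp; ring
  have hprod : lam * mu = d := by rw [hmu]; field_simp
  have hne : lam ≠ mu := by
    intro h
    apply hdet
    linear_combination lam * h + hprod
  clear_value v mu
  -- count of the eigenvalue set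
  have hN : (univ.filter (fun m : Matrix (Fin 2) (Fin 2) F =>
        Matrix.det m = d ∧ Matrix.det (m - lam • 1) = 0)).card
      = Fintype.card F * (Fintype.card F - 1) + 2 * Fintype.card F := by
    rw [card_matrix_filter]
    rw [card_filter_prod (fun p : (F × F) × (F × F) =>
        Matrix.det !![p.1.1, p.2.1; p.2.2, p.1.2] = d ∧
        Matrix.det (!![p.1.1, p.2.1; p.2.2, p.1.2] - lam • 1) = 0)]
    have inner : ∀ x : F × F,
        (univ.filter (fun y : F × F =>
          Matrix.det !![x.1, y.1; y.2, x.2] = d ∧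
          Matrix.det (!![x.1, y.1; y.2, x.2] - lam • 1) = 0)).card
        = if x.2 = v - x.1 then ((Fintype.card F - 1) + if x.1 * x.2 = d then Fintype.card F else 0) else 0 := by
      intro x
      have he : (univ.filter (fun y : F × F =>
            Matrix.det !![x.1, y.1; y.2, x.2] = d ∧
            Matrix.det (!![x.1, y.1; y.2, x.2] - lam • 1) = 0))
          = univ.filter (fun y : F × F =>
            x.2 = v - x.1 ∧ y.1 * y.2 = x.1 * x.2 - d) := by
        apply Finset.filter_congr
        intro y _
        rw [Matrix.det_fin_two_of, det_fin_two_shift]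
        constructor
        · rintro ⟨h1, h2⟩
          constructor
          · rw [hv]
            linear_combination lam⁻¹ * h1 - lam⁻¹ * h2 - (x.1 + x.2) * hinv
          · linear_combination -h1
        · rintro ⟨h1, h2⟩
          constructor
          · linear_combination -h2
          · linear_combination -h2 - lam * h1 + lam * hsum - hprod
      rw [he]
      by_cases h : x.2 = v - x.1
      · rw [if_pos h]
        simp only [eq_true h, true_and]
        rw [card_mul_pair]
        congr 1
        simp [sub_eq_zero]
      · rw [if_neg h, Finset.filter_false_of_mem, Finset.card_empty]
        intro y _
        exact fun hc => h hc.1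
    simp only [inner]
    rw [← Finset.univ_product_univ, Finset.sum_product]
    simp only [Finset.sum_ite_eq' univ, Finset.mem_univ, if_true]
    rw [Finset.sum_add_distrib, Finset.sum_const, Finset.card_univ, ← Finset.sum_filter,
      Finset.sum_const]
    have hroots : (univ.filter (fun a : F => a * (v - a) = d)) = {lam, mu} := by
      ext a
      simp only [Finset.mem_filter, Finset.mem_univ, true_and, Finset.mem_insert,
        Finset.mem_singleton]
      constructor
      · intro h
        have hz : (a - lam) * (a - mu) = 0 := by
          linear_combination -h - a * hsum + hprod
        rcases mul_eq_zero.1 hz with hz | hz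
        · exact Or.inl (sub_eq_zero.1 hz)
        · exact Or.inr (sub_eq_zero.1 hz)
      · rintro (h | h)
        · rw [h]; linear_combination -lam * hsum + hprod
        · rw [h]; linear_combination -mu * hsum + hprod
    rw [hroots, Finset.card_insert_of_notMem (by simpa using hne), Finset.card_singleton]
    simp [smul_eq_mul]
  have hM : Fintype.card (Matrix.SpecialLinearGroup (Fin 2) F)
      = Fintype.card F * Fintype.card F * (Fintype.card F - 1)
        + Fintype.card F * (Fintype.card F - 1) := by
    rw [key2, count_det d hd0]
  -- final arithmetic
  rw [key1, hN, hM]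
  set q := Fintype.card F with hqdef
  have hq2 : 2 ≤ q := Fintype.one_lt_card
  clear_value q
  obtain ⟨q', rfl⟩ : ∃ q', q = q' + 2 := ⟨q - 2, by omega⟩
  have hnum : q' + 2 - 1 = q' + 1 := by omega
  rw [hnum]
  push_cast
  have h1 : ((q' : ℝ) + 2) - 1 = (q' : ℝ) + 1 := by ring
  rw [h1, div_eq_div_iff (by positivity) (by positivity)]
  ring
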